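/- Let n ≥ 0 be even and t ≥ 1, and let P be a graded poset of (odd) rank n+1. Then the integer 1+t divides μ(Rees(P, T_{t,n+1})). -/

import Mathlib

/-- The `t`-analogue `[k] = 1 + t + ⋯ + t^(k-1)`. -/
def tnum (t k : ℕ) : ℕ := ∑ i ∈ Finset.range k, t ^ i

/-- Auxiliary product defining the weight `w`: given the previous entry `p` and the
sorted list of remaining entries, multiply the factors `[s - p + 1]`. -/
def wAux (t : ℕ) : ℕ → List ℕ → ℕ
  | _, [] => 1
  | p, s :: rest => tnum t (s - p + 1) * wAux t s rest

/-- The weight `w(S) = [s₁]·[s₂-s₁+1]⋯[s_k-s_{k-1}+1]` for `S = {s₁ < ⋯ < s_k}`,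
with `w(∅) = 1`. -/
def wWeight (t : ℕ) (S : Finset ℕ) : ℕ := wAux t 1 (S.sort (· ≤ ·))

/-- The weight `v(S) = w(S ∪ {n+1}) - w(S)` for nonempty `S ⊆ {1,…,n}`, and
`v(∅) = t·[n]`. -/
def vWeight (t n : ℕ) (S : Finset ℕ) : ℤ :=
  if S = ∅ then t * tnum t n else (wWeight t (S ∪ {n + 1}) : ℤ) - (wWeight t S : ℤ)

/-- The flag `f`-vector entry `f_S` of a bounded poset with rank function `rk`:
the number of chains `⊥ < x₁ < ⋯ < x_k < ⊤` whose multiset of ranks is exactly `S`,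
encoded as strictly increasing rank-respecting functions `S → β`. -/
noncomputable def flagF {β : Type} [PartialOrder β] [BoundedOrder β] (rk : β → ℕ) (S : Finset ℕ) : ℕ :=
  Nat.card {g : {s : ℕ // s ∈ S} → β //
    (∀ s, rk (g s) = s.val) ∧
    (∀ s s' : {s : ℕ // s ∈ S}, s.val < s'.val → g s < g s') ∧
    (∀ s, ⊥ < g s ∧ g s < ⊤)}

/-- The proper part of the Rees product of a graded poset `(α, rk)` of rank `n+1`
with the `t`-ary tree `T_{t,n+1}`: pairs `(p, w)` with `p ≠ ⊥`, `w` a word of length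
at most `n` over a `t`-letter alphabet, and `|w| ≤ rk p - 1`. -/
def ReesElt (α : Type) [PartialOrder α] [OrderBot α] (rk : α → ℕ) (t n : ℕ) : Type :=
  {pw : α × List (Fin t) // pw.1 ≠ ⊥ ∧ pw.2.length ≤ n ∧ pw.2.length + 1 ≤ rk pw.1}

/-- The Rees order: `(p,w) ≤ (p',w')` iff `p ≤ p'`, `w` is a prefix of `w'`, and
`rk p' - rk p ≥ |w'| - |w|`. -/
instance (α : Type) [PartialOrder α] [OrderBot α] (rk : α → ℕ) (t n : ℕ) :
    PartialOrder (ReesElt α rk t n) where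
  le a b := a.1.1 ≤ b.1.1 ∧ a.1.2 <+: b.1.2 ∧
    rk a.1.1 + b.1.2.length ≤ rk b.1.1 + a.1.2.length
  le_refl a := ⟨le_refl _, List.prefix_refl _, le_refl _⟩
  le_trans a b c hab hbc :=
    ⟨hab.1.trans hbc.1, hab.2.1.trans hbc.2.1, by
      have h1 := hab.2.2; have h2 := hbc.2.2; omega⟩
  le_antisymm a b hab hba := by
    apply Subtype.ext
    have h1 : a.1.1 = b.1.1 := le_antisymm hab.1 hba.1
    have h2 : a.1.2 = b.1.2 := hab.2.1.eq_of_length_le hba.2.1.length_le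
    exact Prod.ext h1 h2

/-- The Rees product `Rees(P, T_{t,n+1})`: the proper part together with an adjoined
minimum `⊥` and maximum `⊤`. -/
abbrev ReesTree (α : Type) [PartialOrder α] [OrderBot α] (rk : α → ℕ) (t n : ℕ) : Type :=
  WithBot (WithTop (ReesElt α rk t n))

/-- The rank function of `Rees(P, T_{t,n+1})`: `ρ(⊥) = 0`, `ρ(⊤) = n+2`, and
`ρ(p,w) = rk p`. -/
noncomputable def reesRank (α : Type) [PartialOrder α] [OrderBot α] (rk : α → ℕ) (t n : ℕ) :
    ReesTree α rk t n → ℕ :=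
  WithBot.recBotCoe 0 (WithTop.recTopCoe (n + 2) (fun a => rk a.1.1))

section AuxSt7

open Finset

/-- alternating sum over a range -/
theorem st7_altsum_range (m : ℕ) : ∑ k ∈ Finset.range m, (-1 : ℤ)^k = if Odd m then 1 else 0 := by
  induction m with
  | zero => simp
  | succ m ih =>
    rw [Finset.sum_range_succ, ih]
    rcases Nat.even_or_odd m with h | h
    · simp [h, Nat.not_odd_iff_even.mpr h, Nat.odd_add_one, Nat.not_odd_iff_even.mpr h, h.neg_one_pow]
    · simp [Nat.not_even_iff_odd.mpr h |> fun _ => h, h, Nat.odd_add_one, Nat.not_even_iff_odd.mpr h, h.neg_one_pow]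

/-- alternating sum over an interval -/
theorem st7_altsum_Icc (j d : ℕ) :
    ∑ k ∈ Finset.Icc j (j + d), (-1 : ℤ)^k = if Even d then (-1)^j else 0 := by
  induction d with
  | zero => simp
  | succ d ih =>
    rw [show j + (d+1) = (j+d)+1 by omega, Finset.sum_Icc_succ_top (by omega), ih]
    rcases Nat.even_or_odd d with h | h
    · rw [if_pos h, if_neg (by simp [Nat.even_add_one, h])]
      have : ((-1:ℤ))^(j + d + 1) = -(-1)^j := by
        rw [pow_succ, pow_add, h.neg_one_pow]; ring
      rw [this]; ring
    · rw [if_neg (Nat.not_even_iff_odd.mpr h), if_pos (by simp [Nat.even_add_one, Nat.not_even_iff_odd.mpr h])]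
      have : ((-1:ℤ))^(j + d + 1) = (-1)^j := by
        rw [pow_succ, pow_add, h.neg_one_pow]; ring
      rw [this]; ring

variable {α : Type} [Fintype α] [PartialOrder α]

/-- rank is strictly monotone on a finite poset where covers raise rank by 1 -/
theorem st7_rk_lt (rk : α → ℕ) (hcov : ∀ x y : α, x ⋖ y → rk y = rk x + 1) :
    ∀ x y : α, x < y → rk x < rk y := by
  intro x
  induction x using WellFoundedGT.induction with
  | _ x ih =>
    intro y hxy
    obtain ⟨z, hz, hzy⟩ := exists_covBy_le_of_lt hxy
    have hrz := hcov x z hz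
    rcases eq_or_lt_of_le hzy with rfl | h
    · omega
    · have := ih z hz.lt y h
      omega

open scoped Classical in
/-- The weight function `b` defined by downward recursion on a finite poset with top. -/
noncomputable def st7_bW [OrderTop α] (rk : α → ℕ) (p : α) : ℤ :=
  if Even (rk p) then
    1 - ∑ q ∈ (Finset.univ.filter (fun q => p < q ∧ Even (rk q))).attach, st7_bW rk q.1
  else if p = ⊤ then 1 else 0
termination_by (Finset.univ.filter (fun q => p < q)).card
decreasing_by
  have hq := (Finset.mem_filter.mp q.2).2.1
  apply Finset.card_lt_card
  rw [Finset.ssubset_iff_of_subset]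
  · exact ⟨q.1, Finset.mem_filter.mpr ⟨Finset.mem_univ _, hq⟩, by simp⟩
  · intro r hr
    simp only [Finset.mem_filter, Finset.mem_univ, true_and] at hr ⊢
    exact hq.trans hr

open scoped Classical in
theorem st7_bW_odd [OrderTop α] (rk : α → ℕ) (p : α) (h : ¬ Even (rk p)) (hp : p ≠ ⊤) :
    st7_bW rk p = 0 := by
  rw [st7_bW, if_neg h, if_neg hp]

open scoped Classical in
theorem st7_bW_key [OrderTop α] (rk : α → ℕ) (htopodd : ¬ Even (rk (⊤ : α))) (q : α) :
    ∑ p ∈ Finset.univ.filter (fun p => q ≤ p ∧ (Even (rk p) ↔ Even (rk q))), st7_bW rk p = 1 := by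
  rcases Nat.even_or_odd (rk q) with hq | hq
  · have hfe : Finset.univ.filter (fun p => q ≤ p ∧ (Even (rk p) ↔ Even (rk q)))
        = insert q (Finset.univ.filter (fun p => q < p ∧ Even (rk p))) := by
      ext r
      simp only [Finset.mem_filter, Finset.mem_univ, true_and, Finset.mem_insert]
      constructor
      · rintro ⟨hle, hiff⟩
        rcases eq_or_lt_of_le hle with rfl | hlt
        · exact Or.inl rfl
        · exact Or.inr ⟨hlt, hiff.mpr hq⟩
      · rintro (rfl | ⟨hlt, he⟩)
        · exact ⟨le_rfl, Iff.rfl⟩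
        · exact ⟨hlt.le, by simp [he, hq]⟩
    rw [hfe, Finset.sum_insert (by simp)]
    conv_lhs => rw [st7_bW, if_pos hq]
    rw [Finset.sum_attach _ (fun p => st7_bW rk p)]
    ring
  · rw [Finset.sum_eq_single_of_mem (⊤ : α)]
    · rw [st7_bW, if_neg htopodd, if_pos rfl]
    · simp only [Finset.mem_filter, Finset.mem_univ, true_and]
      exact ⟨le_top, by simp [htopodd, Nat.not_even_iff_odd.mpr hq]⟩
    · intro b hb hbne
      simp only [Finset.mem_filter, Finset.mem_univ, true_and] at hb
      exact st7_bW_odd rk b (by simp [Nat.not_even_iff_odd.mpr hq] at hb; simpa using hb.2) hbne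

end AuxSt7

section AuxSt7b

instance st7_finite (α : Type) [Finite α] [PartialOrder α] [OrderBot α]
    (rk : α → ℕ) (t n : ℕ) : Finite (ReesElt α rk t n) := by
  have hfin : Finite {w : List (Fin t) // w.length ≤ n} :=
    (List.finite_length_le (Fin t) n).to_subtype
  apply Finite.of_injective
    (fun e : ReesElt α rk t n =>
      ((e.1.1, ⟨e.1.2, e.2.2.1⟩) : α × {w : List (Fin t) // w.length ≤ n}))
  intro a b h
  apply Subtype.ext
  have h1 := congrArg Prod.fst h
  have h2 := congrArg (fun x => (Prod.snd x).1) h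
  simp only at h1 h2
  exact Prod.ext h1 h2

open scoped Classical in
/-- `M q j`: the value `mu ⊥ (q, 0^j)`. -/
noncomputable def st7_M (α : Type) [PartialOrder α] [OrderBot α] (rk : α → ℕ) (t n : ℕ)
    (ht : 1 ≤ t) (mu : ReesTree α rk t n → ReesTree α rk t n → ℤ) (q : α) (j : ℕ) : ℤ :=
  if h : q ≠ ⊥ ∧ j ≤ n ∧ j + 1 ≤ rk q then
    mu ⊥ (WithBot.some (WithTop.some
      (⟨(q, List.replicate j ⟨0, ht⟩), h.1, by simpa using h.2.1, by simpa using h.2.2⟩ :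
      ReesElt α rk t n)))
  else 0

end AuxSt7b
theorem statement7 (n t : ℕ) (ht : 1 ≤ t) (hn : Even n)
    (α : Type) [Fintype α] [PartialOrder α] [BoundedOrder α]
    (rk : α → ℕ) (hbot : rk ⊥ = 0) (htop : rk ⊤ = n + 1)
    (hcov : ∀ x y : α, x ⋖ y → rk y = rk x + 1)
    (mu : ReesTree α rk t n → ReesTree α rk t n → ℤ)
    (hmu_refl : ∀ x, mu x x = 1)
    (hmu_rec : ∀ x y : ReesTree α rk t n, x < y → ∑ᶠ z ∈ Set.Icc x y, mu x z = 0) :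
    (1 + (t : ℤ)) ∣ mu ⊥ ⊤ := by
  classical
  haveI : Finite (ReesElt α rk t n) := st7_finite α rk t n
  haveI : Fintype (ReesElt α rk t n) := Fintype.ofFinite _
  haveI : Finite (ReesTree α rk t n) :=
    inferInstanceAs (Finite (Option (Option (ReesElt α rk t n))))
  haveI : Fintype (ReesTree α rk t n) := Fintype.ofFinite _
  have rkmono := st7_rk_lt rk hcov
  have rkle : ∀ x y : α, x ≤ y → rk x ≤ rk y := fun x y h => by
    rcases eq_or_lt_of_le h with rfl | h
    · exact le_rfl
    · exact (rkmono _ _ h).le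
  have rkub : ∀ p : α, rk p ≤ n + 1 := fun p => by
    rcases eq_or_lt_of_le (le_top : p ≤ ⊤) with rfl | h
    · omega
    · have := rkmono _ _ h; omega
  have rkbot : ∀ p : α, p ≠ ⊥ → 1 ≤ rk p := fun p hp => by
    have := rkmono ⊥ p (bot_lt_iff_ne_bot.mpr hp); omega
  have hbotne : ((⊥ : α) ≠ ⊤) := fun h => by rw [h, htop] at hbot; omega
  set M := st7_M α rk t n ht mu with hMdef
  set Qf : Finset (α × ℕ) :=
    (Finset.univ ×ˢ Finset.range (n+1)).filter (fun x => x.1 ≠ ⊥ ∧ x.2 + 1 ≤ rk x.1) with hQf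
  have memQf : ∀ x : α × ℕ, x ∈ Qf ↔ (x.1 ≠ ⊥ ∧ x.2 ≤ n ∧ x.2 + 1 ≤ rk x.1) := by
    intro x
    simp only [hQf, Finset.mem_filter, Finset.mem_product, Finset.mem_univ, true_and,
      Finset.mem_range]
    constructor
    · rintro ⟨h1, h2, h3⟩; exact ⟨h2, by omega, h3⟩
    · rintro ⟨h1, h2, h3⟩; exact ⟨by omega, h1, h3⟩
  set Pf : α → ℕ → Finset (α × ℕ) :=
    fun p k => Qf.filter (fun x => x.1 ≤ p ∧ x.2 ≤ k ∧ rk x.1 + k ≤ rk p + x.2) with hPf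
  have hle : ∀ a b : ReesElt α rk t n, a ≤ b ↔ (a.1.1 ≤ b.1.1 ∧ a.1.2 <+: b.1.2 ∧
      rk a.1.1 + b.1.2.length ≤ rk b.1.1 + a.1.2.length) := fun a b => Iff.rfl
  have hmeas : ∀ a b : ReesElt α rk t n, a ≤ b → a ≠ b →
      rk a.1.1 + a.1.2.length < rk b.1.1 + b.1.2.length := by
    intro a b hab hne
    obtain ⟨h1, h2, h3⟩ := (hle a b).mp hab
    have hlen := h2.length_le
    rcases eq_or_lt_of_le h1 with heq | hlt
    · have hrkeq : rk a.1.1 = rk b.1.1 := by rw [heq]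
      have hlen2 : b.1.2.length ≤ a.1.2.length := by omega
      have hlist : a.1.2 = b.1.2 := h2.eq_of_length_le hlen2
      exact absurd (Subtype.ext (Prod.ext heq hlist)) hne
    · have := rkmono _ _ hlt; omega
  have hrec1 : ∀ e : ReesElt α rk t n,
      1 + ∑ e' ∈ Finset.univ.filter (fun e' : ReesElt α rk t n => e' ≤ e),
        mu ⊥ (WithBot.some (WithTop.some e')) = 0 := by
    intro e
    have hlt : (⊥ : ReesTree α rk t n) < WithBot.some (WithTop.some e) := WithBot.bot_lt_coe _
    have h0 := hmu_rec ⊥ _ hlt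
    have hset : Set.Icc (⊥ : ReesTree α rk t n) (WithBot.some (WithTop.some e))
        = ↑(Finset.univ.filter
            (fun z : ReesTree α rk t n => z ≤ WithBot.some (WithTop.some e))) := by
      ext z
      simp [Set.mem_Icc]
    rw [hset, finsum_mem_coe_finset] at h0
    have hsplit : Finset.univ.filter
          (fun z : ReesTree α rk t n => z ≤ WithBot.some (WithTop.some e))
        = insert ⊥ ((Finset.univ.filter (fun e' : ReesElt α rk t n => e' ≤ e)).image
            (fun e' => WithBot.some (WithTop.some e'))) := by
      ext z
      simp only [Finset.mem_filter, Finset.mem_univ, true_and, Finset.mem_insert,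
        Finset.mem_image]
      induction z using WithBot.recBotCoe with
      | bot => simp
      | coe z =>
        induction z using WithTop.recTopCoe with
        | top =>
          simp only [WithBot.coe_le_coe]
          constructor
          · intro h
            exact absurd (top_le_iff.mp h) WithTop.coe_ne_top
          · rintro (h | ⟨e', -, h⟩)
            · exact absurd h (WithBot.coe_ne_bot)
            · exact absurd (WithBot.coe_injective h) WithTop.coe_ne_top
        | coe e' =>
          simp only [WithBot.coe_le_coe, WithTop.coe_le_coe]
          constructor
          · intro h
            exact Or.inr ⟨e', h, rfl⟩
          · rintro (h | ⟨e'', he'', h⟩)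
            · exact absurd h (by simp)
            · have : e'' = e' := WithTop.coe_injective (WithBot.coe_injective h)
              exact this ▸ he''
    rw [hsplit, Finset.sum_insert (by simp), Finset.sum_image
      (fun a _ b _ h => WithTop.coe_injective (WithBot.coe_injective h)), hmu_refl ⊥] at h0
    linarith [h0]

  have hrec2 : 1 + (∑ e' : ReesElt α rk t n, mu ⊥ (WithBot.some (WithTop.some e'))) + mu ⊥ ⊤ = 0 := by
    have hlt : (⊥ : ReesTree α rk t n) < ⊤ := by
      rw [← WithBot.coe_top]
      exact WithBot.bot_lt_coe _
    have h0 := hmu_rec ⊥ ⊤ hlt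
    have hset : Set.Icc (⊥ : ReesTree α rk t n) ⊤
        = ↑(Finset.univ : Finset (ReesTree α rk t n)) := by
      ext z; simp [Set.mem_Icc]
    rw [hset, finsum_mem_coe_finset] at h0
    have hsplit : (Finset.univ : Finset (ReesTree α rk t n))
        = insert ⊥ (insert ⊤ ((Finset.univ : Finset (ReesElt α rk t n)).image
            (fun e' => WithBot.some (WithTop.some e')))) := by
      ext z
      simp only [Finset.mem_univ, true_iff, Finset.mem_insert, Finset.mem_image]
      induction z using WithBot.recBotCoe with
      | bot => exact Or.inl rfl
      | coe z =>
        induction z using WithTop.recTopCoe with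
        | top => exact Or.inr (Or.inl WithBot.coe_top)
        | coe e' => exact Or.inr (Or.inr ⟨e', trivial, rfl⟩)
    have hb1 : (⊥ : ReesTree α rk t n) ∉ insert ⊤
        ((Finset.univ : Finset (ReesElt α rk t n)).image
          (fun e' => WithBot.some (WithTop.some e'))) := by
      simp only [Finset.mem_insert, Finset.mem_image, not_or]
      constructor
      · rw [← WithBot.coe_top]; exact WithBot.bot_ne_coe
      · push_neg
        intro e' _
        exact WithBot.coe_ne_bot
    have hb2 : (⊤ : ReesTree α rk t n) ∉
        ((Finset.univ : Finset (ReesElt α rk t n)).image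
          (fun e' => WithBot.some (WithTop.some e'))) := by
      simp only [Finset.mem_image, not_exists]
      intro e'
      rw [← WithBot.coe_top]
      intro ⟨_, h⟩
      exact absurd (WithBot.coe_injective h) WithTop.coe_ne_top
    rw [hsplit, Finset.sum_insert hb1, Finset.sum_insert hb2, Finset.sum_image
      (fun a _ b _ h => WithTop.coe_injective (WithBot.coe_injective h)), hmu_refl ⊥] at h0
    linarith

  have hbijG : ∀ (G : α × ℕ → ℤ) (e : ReesElt α rk t n),
      ∑ e' ∈ Finset.univ.filter (fun e' : ReesElt α rk t n => e' ≤ e), G (e'.1.1, e'.1.2.length)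
        = ∑ x ∈ Pf e.1.1 e.1.2.length, G x := by
    intro G e
    apply Finset.sum_bij (fun e' _ => (e'.1.1, e'.1.2.length))
    · intro a ha
      rw [Finset.mem_filter] at ha
      obtain ⟨h1, h2, h3⟩ := (hle a e).mp ha.2
      simp only [hPf]
      rw [Finset.mem_filter]
      exact ⟨(memQf _).mpr ⟨a.2.1, a.2.2.1, a.2.2.2⟩, h1, h2.length_le, h3⟩
    · intro a1 ha1 a2 ha2 hi
      rw [Finset.mem_filter] at ha1 ha2
      obtain ⟨-, hpre1, -⟩ := (hle a1 e).mp ha1.2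
      obtain ⟨-, hpre2, -⟩ := (hle a2 e).mp ha2.2
      have h1 := congrArg Prod.fst hi
      have h2 := congrArg Prod.snd hi
      simp only at h1 h2
      apply Subtype.ext
      apply Prod.ext h1
      rw [List.prefix_iff_eq_take.mp hpre1, List.prefix_iff_eq_take.mp hpre2, h2]
    · rintro ⟨q, j⟩ hb
      simp only [hPf] at hb
      rw [Finset.mem_filter, memQf] at hb
      obtain ⟨⟨hqb, hjn, hjr⟩, hqp, hjk, hrk⟩ := hb
      dsimp only at hqb hjn hjr hqp hjk hrk
      refine ⟨⟨(q, e.1.2.take j), hqb, ?_, ?_⟩, ?_, ?_⟩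
      · simp only [List.length_take]; omega
      · simp only [List.length_take]; omega
      · apply Finset.mem_filter.mpr
        refine ⟨Finset.mem_univ _, (hle _ e).mpr ⟨hqp, List.take_prefix j e.1.2, ?_⟩⟩
        simp only [List.length_take]; omega
      · refine Prod.ext rfl ?_
        simp only [List.length_take]; omega
    · intro a ha; rfl

  have hA : ∀ N (e : ReesElt α rk t n), rk e.1.1 + e.1.2.length ≤ N →
      mu ⊥ (WithBot.some (WithTop.some e)) = M e.1.1 e.1.2.length := by
    intro N
    induction N with
    | zero =>
      intro e he
      have := rkbot e.1.1 e.2.1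
      omega
    | succ N ih =>
      have hstar : ∀ e' : ReesElt α rk t n, rk e'.1.1 + e'.1.2.length ≤ N + 1 →
          mu ⊥ (WithBot.some (WithTop.some e'))
            = -1 - (∑ x ∈ Pf e'.1.1 e'.1.2.length, M x.1 x.2) + M e'.1.1 e'.1.2.length := by
        intro e' he'
        have h1 := hrec1 e'
        have hmem : e' ∈ Finset.univ.filter (fun a : ReesElt α rk t n => a ≤ e') := by
          rw [Finset.mem_filter]; exact ⟨Finset.mem_univ _, le_rfl⟩
        have h2 := Finset.sum_erase_eq_sub (f := fun a : ReesElt α rk t n =>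
          mu ⊥ (WithBot.some (WithTop.some a))) hmem
        have h3 : ∀ a ∈ (Finset.univ.filter (fun a : ReesElt α rk t n => a ≤ e')).erase e',
            mu ⊥ (WithBot.some (WithTop.some a)) = M a.1.1 a.1.2.length := by
          intro a hamem
          rw [Finset.mem_erase, Finset.mem_filter] at hamem
          exact ih a (by have := hmeas a e' hamem.2.2 hamem.1; omega)
        rw [Finset.sum_congr rfl h3] at h2
        have h4 := Finset.sum_erase_eq_sub (f := fun a : ReesElt α rk t n =>
          M a.1.1 a.1.2.length) hmem
        have h5 := hbijG (fun x => M x.1 x.2) e'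
        dsimp only at h5
        rw [h4, h5] at h2
        linarith [h1, h2]
      intro e he
      have hs := hstar e he
      have hs2 := hstar ⟨(e.1.1, List.replicate e.1.2.length (⟨0, ht⟩ : Fin t)), e.2.1,
        by simpa using e.2.2.1, by simpa using e.2.2.2⟩ (by simpa using he)
      simp only [List.length_replicate] at hs2
      have hMev : M e.1.1 e.1.2.length
          = mu ⊥ (WithBot.some (WithTop.some (⟨(e.1.1, List.replicate e.1.2.length
              (⟨0, ht⟩ : Fin t)), e.2.1, by simpa using e.2.2.1, by simpa using e.2.2.2⟩ :
              ReesElt α rk t n))) := by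
        rw [hMdef, st7_M, dif_pos ⟨e.2.1, e.2.2.1, e.2.2.2⟩]
      have hSigma : ∑ x ∈ Pf e.1.1 e.1.2.length, M x.1 x.2 = -1 := by
        rw [hMev] at hs2
        linarith [hs2]
      rw [hs, hSigma]
      ring
  have hA' : ∀ e : ReesElt α rk t n,
      mu ⊥ (WithBot.some (WithTop.some e)) = M e.1.1 e.1.2.length := fun e => hA _ e le_rfl
  have hR : ∀ p k, p ≠ ⊥ → k ≤ n → k + 1 ≤ rk p → 1 + ∑ x ∈ Pf p k, M x.1 x.2 = 0 := by
    intro p k hp hkn hkr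
    have hkn' : (List.replicate k (⟨0, ht⟩ : Fin t)).length ≤ n := by simpa using hkn
    have hkr' : (List.replicate k (⟨0, ht⟩ : Fin t)).length + 1 ≤ rk p := by simpa using hkr
    have h1 := hrec1 ⟨(p, List.replicate k (⟨0, ht⟩ : Fin t)), hp, hkn', hkr'⟩
    have h3 : ∀ a ∈ Finset.univ.filter (fun a : ReesElt α rk t n =>
        a ≤ (⟨(p, List.replicate k (⟨0, ht⟩ : Fin t)), hp, hkn', hkr'⟩ : ReesElt α rk t n)),
        mu ⊥ (WithBot.some (WithTop.some a)) = M a.1.1 a.1.2.length := fun a _ => hA' a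
    rw [Finset.sum_congr rfl h3] at h1
    have h5 := hbijG (fun x => M x.1 x.2)
      ⟨(p, List.replicate k (⟨0, ht⟩ : Fin t)), hp, hkn', hkr'⟩
    dsimp only at h5
    rw [h5] at h1
    simp only [List.length_replicate] at h1
    exact h1
  have hTop : mu ⊥ ⊤ = -1 - ∑ x ∈ Qf, (t:ℤ)^x.2 * M x.1 x.2 := by
    have hcard : ∀ x ∈ Qf, (Finset.univ.filter
        (fun e' : ReesElt α rk t n => (e'.1.1, e'.1.2.length) = x)).card = t ^ x.2 := by
      rintro ⟨q, j⟩ hx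
      rw [memQf] at hx
      obtain ⟨hq, hjn, hjr⟩ := hx
      dsimp only at hq hjn hjr ⊢
      have eqv : {e' : ReesElt α rk t n // (e'.1.1, e'.1.2.length) = (q, j)}
          ≃ List.Vector (Fin t) j :=
        { toFun := fun a => ⟨a.1.1.2, by
            have h2 := congrArg Prod.snd a.2
            simpa using h2⟩
          invFun := fun v => ⟨⟨(q, v.1), hq, by
              show v.1.length ≤ n
              rw [v.2]; exact hjn, by
              show v.1.length + 1 ≤ rk q
              rw [v.2]; exact hjr⟩, Prod.ext rfl v.2⟩
          left_inv := fun a => by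
            apply Subtype.ext; apply Subtype.ext
            have h1 := congrArg Prod.fst a.2
            dsimp only at h1
            exact Prod.ext h1.symm rfl
          right_inv := fun v => Subtype.ext rfl }
      calc (Finset.univ.filter
          (fun e' : ReesElt α rk t n => (e'.1.1, e'.1.2.length) = (q, j))).card
          = Fintype.card {e' : ReesElt α rk t n // (e'.1.1, e'.1.2.length) = (q, j)} :=
            (Fintype.card_subtype _).symm
        _ = Fintype.card (List.Vector (Fin t) j) := Fintype.card_congr eqv
        _ = t ^ j := by rw [card_vector, Fintype.card_fin]
    have hmaps : ∀ e' ∈ (Finset.univ : Finset (ReesElt α rk t n)),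
        (e'.1.1, e'.1.2.length) ∈ Qf := fun e' _ =>
      (memQf _).mpr ⟨e'.2.1, e'.2.2.1, e'.2.2.2⟩
    have hfib := Finset.sum_fiberwise_of_maps_to hmaps
      (fun e' : ReesElt α rk t n => M e'.1.1 e'.1.2.length)
    have hinner : ∀ x ∈ Qf, (∑ e' ∈ Finset.univ.filter
        (fun e' : ReesElt α rk t n => (e'.1.1, e'.1.2.length) = x), M e'.1.1 e'.1.2.length)
        = (t:ℤ)^x.2 * M x.1 x.2 := by
      intro x hx
      have hconst : ∀ a ∈ Finset.univ.filter
          (fun e' : ReesElt α rk t n => (e'.1.1, e'.1.2.length) = x),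
          M a.1.1 a.1.2.length = M x.1 x.2 := by
        intro a hamem
        rw [Finset.mem_filter] at hamem
        rw [← hamem.2]
      rw [Finset.sum_congr rfl hconst, Finset.sum_const, nsmul_eq_mul, hcard x hx]
      push_cast
      ring
    have h1 := hrec2
    have h3 : ∀ e' ∈ (Finset.univ : Finset (ReesElt α rk t n)),
        mu ⊥ (WithBot.some (WithTop.some e')) = M e'.1.1 e'.1.2.length := fun e' _ => hA' e'
    rw [Finset.sum_congr rfl h3, ← hfib, Finset.sum_congr rfl hinner] at h1
    linarith
  have hKey : ∑ x ∈ Qf, (-1:ℤ)^x.2 * M x.1 x.2 = -1 := by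
    have htopodd : ¬ Even (rk (⊤:α)) := by
      rw [htop]
      simp [Nat.even_add_one, hn]
    have hW : ∑ y ∈ Qf, st7_bW rk y.1 * (-1:ℤ)^y.2 * (1 + ∑ x ∈ Pf y.1 y.2, M x.1 x.2) = 0 := by
      apply Finset.sum_eq_zero
      intro y hy
      rw [memQf] at hy
      rw [hR y.1 y.2 hy.1 hy.2.1 hy.2.2]
      ring
    have hC1 : ∑ y ∈ Qf, st7_bW rk y.1 * (-1:ℤ)^y.2 = 1 := by
      rw [hQf, Finset.sum_filter, Finset.sum_product]
      have hin : ∀ p : α, (∑ k ∈ Finset.range (n+1),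
          if ((p, k).1 ≠ ⊥ ∧ (p, k).2 + 1 ≤ rk (p, k).1)
            then st7_bW rk (p, k).1 * (-1:ℤ)^(p, k).2 else 0)
          = if (p ≠ ⊥ ∧ Odd (rk p)) then st7_bW rk p else 0 := by
        intro p
        by_cases hp : p = ⊥
        · subst hp
          simp [hbot]
        · simp only [hp, ne_eq, not_false_eq_true, true_and]
          have hfe : Finset.filter (fun k => k + 1 ≤ rk p) (Finset.range (n+1))
              = Finset.range (rk p) := by
            ext k
            simp only [Finset.mem_filter, Finset.mem_range]
            have := rkub p
            omega
          rw [← Finset.sum_filter, hfe, ← Finset.mul_sum, st7_altsum_range]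
          by_cases hodd : Odd (rk p) <;> simp [hodd]
      rw [Finset.sum_congr rfl (fun p _ => hin p)]
      rw [Finset.sum_eq_single_of_mem (⊤:α) (Finset.mem_univ _)]
      · rw [if_pos ⟨Ne.symm hbotne, Nat.not_even_iff_odd.mp htopodd⟩]
        rw [st7_bW, if_neg htopodd, if_pos rfl]
      · intro b _ hbne
        by_cases hob : b ≠ ⊥ ∧ Odd (rk b)
        · rw [if_pos hob]
          exact st7_bW_odd rk b (Nat.not_even_iff_odd.mpr hob.2) hbne
        · rw [if_neg hob]
    have hinner2 : ∀ x ∈ Qf, (∑ y ∈ Qf, if x.1 ≤ y.1 ∧ x.2 ≤ y.2 ∧ rk x.1 + y.2 ≤ rk y.1 + x.2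
        then st7_bW rk y.1 * (-1:ℤ)^y.2 else 0) = (-1:ℤ)^x.2 := by
      rintro ⟨q, j⟩ hx
      rw [memQf] at hx
      obtain ⟨hq, hjn, hjr⟩ := hx
      dsimp only at hq hjn hjr ⊢
      rw [hQf, ← Finset.sum_filter, Finset.filter_filter, Finset.sum_filter,
        Finset.sum_product]
      have han : ∀ p : α, (∑ k ∈ Finset.range (n+1),
          if (((p, k).1 ≠ ⊥ ∧ (p, k).2 + 1 ≤ rk (p, k).1) ∧
            q ≤ (p, k).1 ∧ j ≤ (p, k).2 ∧ rk q + (p, k).2 ≤ rk (p, k).1 + j)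
            then st7_bW rk (p, k).1 * (-1:ℤ)^(p, k).2 else 0)
          = if (q ≤ p ∧ (Even (rk p) ↔ Even (rk q))) then st7_bW rk p * (-1:ℤ)^j else 0 := by
        intro p
        by_cases hqp : q ≤ p
        · have hrkle : rk q ≤ rk p := rkle _ _ hqp
          have hpne : p ≠ ⊥ := by
            intro h
            exact hq (le_bot_iff.mp (h ▸ hqp))
          have hfe : Finset.filter (fun k => ((p, k).1 ≠ ⊥ ∧ (p, k).2 + 1 ≤ rk (p, k).1) ∧
              q ≤ (p, k).1 ∧ j ≤ (p, k).2 ∧ rk q + (p, k).2 ≤ rk (p, k).1 + j)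
                (Finset.range (n+1))
              = Finset.Icc j (j + (rk p - rk q)) := by
            ext k
            simp only [Finset.mem_filter, Finset.mem_range, Finset.mem_Icc, hpne, hqp,
              ne_eq, not_false_eq_true, true_and]
            have := rkub p
            omega
          rw [← Finset.sum_filter, hfe]
          dsimp only
          rw [← Finset.mul_sum, st7_altsum_Icc]
          have hevv : Even (rk p - rk q) ↔ (Even (rk p) ↔ Even (rk q)) := Nat.even_sub hrkle
          by_cases hev : Even (rk p - rk q)
          · rw [if_pos hev, if_pos ⟨hqp, hevv.mp hev⟩]
          · rw [if_neg hev, if_neg (fun hc => hev (hevv.mpr hc.2)), mul_zero]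
        · have : ∀ k ∈ Finset.range (n+1),
              (if (((p, k).1 ≠ ⊥ ∧ (p, k).2 + 1 ≤ rk (p, k).1) ∧
                q ≤ (p, k).1 ∧ j ≤ (p, k).2 ∧ rk q + (p, k).2 ≤ rk (p, k).1 + j)
                then st7_bW rk (p, k).1 * (-1:ℤ)^(p, k).2 else 0) = 0 := by
            intro k _
            rw [if_neg]
            rintro ⟨-, hc, -⟩
            exact hqp hc
          rw [Finset.sum_congr rfl this, Finset.sum_const, smul_zero,
            if_neg (fun hc => hqp hc.1)]
      rw [Finset.sum_congr rfl (fun p _ => han p), ← Finset.sum_filter, ← Finset.sum_mul,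
        st7_bW_key rk htopodd q, one_mul]
    have hC2 : (∑ y ∈ Qf, ∑ x ∈ Pf y.1 y.2, st7_bW rk y.1 * (-1:ℤ)^y.2 * M x.1 x.2)
        = ∑ x ∈ Qf, (-1:ℤ)^x.2 * M x.1 x.2 := by
      have h1 : ∀ y ∈ Qf, (∑ x ∈ Pf y.1 y.2, st7_bW rk y.1 * (-1:ℤ)^y.2 * M x.1 x.2)
          = ∑ x ∈ Qf, (if x.1 ≤ y.1 ∧ x.2 ≤ y.2 ∧ rk x.1 + y.2 ≤ rk y.1 + x.2
              then st7_bW rk y.1 * (-1:ℤ)^y.2 else 0) * M x.1 x.2 := by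
        intro y _
        rw [hPf]
        rw [Finset.sum_filter]
        apply Finset.sum_congr rfl
        intro x _
        by_cases hc : x.1 ≤ y.1 ∧ x.2 ≤ y.2 ∧ rk x.1 + y.2 ≤ rk y.1 + x.2
        · rw [if_pos hc, if_pos hc]
        · rw [if_neg hc, if_neg hc, zero_mul]
      rw [Finset.sum_congr rfl h1, Finset.sum_comm]
      apply Finset.sum_congr rfl
      intro x hx
      rw [← Finset.sum_mul, hinner2 x hx]
    have hexp : ∑ y ∈ Qf, st7_bW rk y.1 * (-1:ℤ)^y.2 * (1 + ∑ x ∈ Pf y.1 y.2, M x.1 x.2)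
        = (∑ y ∈ Qf, st7_bW rk y.1 * (-1:ℤ)^y.2)
          + ∑ y ∈ Qf, ∑ x ∈ Pf y.1 y.2, st7_bW rk y.1 * (-1:ℤ)^y.2 * M x.1 x.2 := by
      rw [← Finset.sum_add_distrib]
      apply Finset.sum_congr rfl
      intro y _
      rw [mul_add, mul_one, Finset.mul_sum]
    rw [hexp, hC1, hC2] at hW
    linarith

  have hdvd : (1 + (t:ℤ)) ∣
      (∑ x ∈ Qf, (t:ℤ)^x.2 * M x.1 x.2 - ∑ x ∈ Qf, (-1:ℤ)^x.2 * M x.1 x.2) := by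
    rw [← Finset.sum_sub_distrib]
    apply Finset.dvd_sum
    intro x hx
    have he : (t:ℤ)^x.2 * M x.1 x.2 - (-1)^x.2 * M x.1 x.2
        = ((t:ℤ)^x.2 - (-1)^x.2) * M x.1 x.2 := by ring
    rw [he]
    apply Dvd.dvd.mul_right
    have h2 : (t:ℤ) - (-1) = 1 + t := by ring
    have := sub_dvd_pow_sub_pow (t:ℤ) (-1) x.2
    rwa [h2] at this
  have hfin : mu ⊥ ⊤ = -(∑ x ∈ Qf, ((t:ℤ)^x.2 * M x.1 x.2)
      - ∑ x ∈ Qf, ((-1:ℤ)^x.2 * M x.1 x.2)) := by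
    have := hKey; rw [hTop]; linarith
  rw [hfin]
  exact dvd_neg.mpr hdvd
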